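/- Let (A, ≻_A, ≺_A, Δ_≻, Δ_≺) be a finite-dimensional anti-dendriform bialgebra with double anti-dendriform algebra D = A ⊕ A*. Let {e₁,…,eₙ} be a basis of A with dual basis {e₁*,…,eₙ*} and set r = Σᵢ eᵢ ⊗ eᵢ* ∈ D⊗D. Then r is a solution of the anti-dendriform Yang-Baxter equation r₁₂·_D r₁₃ + r₂₃≻_D r₁₂ - r₁₃≺_D r₂₃ = 0 in (D, ≻_D, ≺_D). -/

import Mathlib

open TensorProduct

set_option synthInstance.maxHeartbeats 1000000
set_option maxHeartbeats 1600000

variable {K : Type*} [Field K]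

/-- The anti-dendriform algebra identities for two bilinear operations `s` (≻) and `p` (≺):
`x≻(y≻z) = -(x·y)≻z = -x≺(y·z) = (x≺y)≺z` and `(x≻y)≺z = x≻(y≺z)`, where `x·y = x≻y + x≺y`. -/
def IsAntiDend {M : Type*} [AddCommGroup M] [Module K M]
    (s p : M →ₗ[K] M →ₗ[K] M) : Prop :=
  ∀ x y z : M,
    s x (s y z) = - s (s x y + p x y) z ∧
    s x (s y z) = - p x (s y z + p y z) ∧
    s x (s y z) = p (p x y) z ∧
    p (s x y) z = s x (p y z)

/-- The bilinear map `a ⊗ b ↦ (ζ ↦ ζ(a) • b)` used to define `T_r`. -/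
noncomputable def Tbil {M : Type*} [AddCommGroup M] [Module K M] :
    M →ₗ[K] M →ₗ[K] (Module.Dual K M →ₗ[K] M) :=
  LinearMap.mk₂ K (fun a b => (Module.Dual.eval K M a).smulRight b)
    (fun a a' b => by ext ζ; simp [add_smul])
    (fun c a b => by
      ext ζ
      simp only [LinearMap.smulRight_apply, LinearMap.smul_apply, map_smul,
        Module.Dual.eval_apply, smul_eq_mul, mul_smul])
    (fun a b b' => by ext ζ; simp)
    (fun c a b => by
      ext ζ
      simp only [LinearMap.smulRight_apply, LinearMap.smul_apply]
      exact smul_comm _ _ _)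

/-- `T_r : A* → A`, `⟨T_r ζ, η⟩ = ⟨r, ζ ⊗ η⟩`; concretely `T_r ζ = Σ ζ(aᵢ) • bᵢ`
for `r = Σ aᵢ ⊗ bᵢ`. -/
noncomputable def TmL {M : Type*} [AddCommGroup M] [Module K M] (r : M ⊗[K] M) :
    Module.Dual K M →ₗ[K] M :=
  TensorProduct.lift Tbil r

/-- The flip `τ : A ⊗ A → A ⊗ A`. -/
noncomputable def tau {M : Type*} [AddCommGroup M] [Module K M] (r : M ⊗[K] M) : M ⊗[K] M :=
  TensorProduct.comm K M M r

/-- `r` is invariant: `(R_≺(x)⊗I + I⊗L_·(x)) r = 0` and `(R_·(x)⊗I + I⊗L_≻(x)) r = 0`. -/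
def Invariant {M : Type*} [AddCommGroup M] [Module K M]
    (s p : M →ₗ[K] M →ₗ[K] M) (r : M ⊗[K] M) : Prop :=
  ∀ x : M,
    TensorProduct.map (p.flip x) (LinearMap.id : M →ₗ[K] M) r
      + TensorProduct.map (LinearMap.id : M →ₗ[K] M) ((s + p) x) r = 0 ∧
    TensorProduct.map ((s + p).flip x) (LinearMap.id : M →ₗ[K] M) r
      + TensorProduct.map (LinearMap.id : M →ₗ[K] M) (s x) r = 0

/-- `(a⊗b)⊗(c⊗d) ↦ (m a c) ⊗ b ⊗ d` : the product is placed in the first tensor slot,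
giving `r₁₂ ∗ r₁₃` when applied to `r ⊗ r`. -/
noncomputable def place1 {M : Type*} [AddCommGroup M] [Module K M]
    (m : M →ₗ[K] M →ₗ[K] M) :
    (M ⊗[K] M) ⊗[K] (M ⊗[K] M) →ₗ[K] M ⊗[K] (M ⊗[K] M) :=
  (TensorProduct.map (TensorProduct.lift m)
      (LinearMap.id : M ⊗[K] M →ₗ[K] M ⊗[K] M)) ∘ₗ
    (TensorProduct.tensorTensorTensorComm K M M M M).toLinearMap

/-- `(a⊗b)⊗(c⊗d) ↦ c ⊗ (m a d) ⊗ b` : the product in the second slot, giving `r₂₃ ∗ r₁₂`. -/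
noncomputable def place2 {M : Type*} [AddCommGroup M] [Module K M]
    (m : M →ₗ[K] M →ₗ[K] M) :
    (M ⊗[K] M) ⊗[K] (M ⊗[K] M) →ₗ[K] M ⊗[K] (M ⊗[K] M) :=
  (TensorProduct.leftComm K M M M).toLinearMap ∘ₗ
  (TensorProduct.map (LinearMap.id : M →ₗ[K] M) (TensorProduct.comm K M M).toLinearMap) ∘ₗ
  (TensorProduct.map (TensorProduct.lift m)
      (LinearMap.id : M ⊗[K] M →ₗ[K] M ⊗[K] M)) ∘ₗ
  (TensorProduct.tensorTensorTensorComm K M M M M).toLinearMap ∘ₗ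
  (TensorProduct.congr (LinearEquiv.refl K (M ⊗[K] M)) (TensorProduct.comm K M M)).toLinearMap

/-- `(a⊗b)⊗(c⊗d) ↦ a ⊗ c ⊗ (m b d)` : the product in the third slot, giving `r₁₃ ∗ r₂₃`. -/
noncomputable def place3 {M : Type*} [AddCommGroup M] [Module K M]
    (m : M →ₗ[K] M →ₗ[K] M) :
    (M ⊗[K] M) ⊗[K] (M ⊗[K] M) →ₗ[K] M ⊗[K] (M ⊗[K] M) :=
  (TensorProduct.assoc K M M M).toLinearMap ∘ₗ
  (TensorProduct.map (LinearMap.id : M ⊗[K] M →ₗ[K] M ⊗[K] M) (TensorProduct.lift m)) ∘ₗ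
  (TensorProduct.tensorTensorTensorComm K M M M M).toLinearMap

/-- `D(r) = r₁₂·r₁₃ + r₂₃≻r₁₂ - r₁₃≺r₂₃`. -/
noncomputable def adD {M : Type*} [AddCommGroup M] [Module K M]
    (s p : M →ₗ[K] M →ₗ[K] M) (r : M ⊗[K] M) : M ⊗[K] (M ⊗[K] M) :=
  place1 (s + p) (r ⊗ₜ[K] r) + place2 s (r ⊗ₜ[K] r) - place3 p (r ⊗ₜ[K] r)

/-- `D₁(r) = r₂₃·r₁₂ + r₁₃≻r₂₃ + r₁₂≺r₁₃`. -/
noncomputable def adD1 {M : Type*} [AddCommGroup M] [Module K M]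
    (s p : M →ₗ[K] M →ₗ[K] M) (r : M ⊗[K] M) : M ⊗[K] (M ⊗[K] M) :=
  place2 (s + p) (r ⊗ₜ[K] r) + place3 s (r ⊗ₜ[K] r) + place1 p (r ⊗ₜ[K] r)

/-- `D₂(r) = r₁₃·r₂₃ - r₁₂≻r₁₃ + r₂₃≺r₁₂`. -/
noncomputable def adD2 {M : Type*} [AddCommGroup M] [Module K M]
    (s p : M →ₗ[K] M →ₗ[K] M) (r : M ⊗[K] M) : M ⊗[K] (M ⊗[K] M) :=
  place3 (s + p) (r ⊗ₜ[K] r) - place1 s (r ⊗ₜ[K] r) + place2 p (r ⊗ₜ[K] r)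

/-- The anti-dendriform Yang-Baxter equation `D(r) = 0`. -/
noncomputable def AYBE {M : Type*} [AddCommGroup M] [Module K M]
    (s p : M →ₗ[K] M →ₗ[K] M) (r : M ⊗[K] M) : Prop :=
  adD s p r = 0

section Double

variable (A : Type*) [AddCommGroup A] [Module K A] [FiniteDimensional K A]

/-- For an operation `m` on `A*`, the coadjoint operator `a ↦ R_m(a)*` acting on
`A ≅ A**`. -/
noncomputable def RstarB
    (m : Module.Dual K A →ₗ[K] Module.Dual K A →ₗ[K] Module.Dual K A) :
    Module.Dual K A →ₗ[K] (A →ₗ[K] A) :=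
  (((Module.evalEquiv K A).symm.conj).toLinearMap :
      Module.End K (Module.Dual K (Module.Dual K A)) →ₗ[K] Module.End K A) ∘ₗ
    (Module.Dual.transpose :
      (Module.Dual K A →ₗ[K] Module.Dual K A) →ₗ[K]
        (Module.Dual K (Module.Dual K A) →ₗ[K] Module.Dual K (Module.Dual K A))) ∘ₗ
    m.flip

/-- For an operation `m` on `A*`, the coadjoint operator `a ↦ L_m(a)*` acting on
`A ≅ A**`. -/
noncomputable def LstarB
    (m : Module.Dual K A →ₗ[K] Module.Dual K A →ₗ[K] Module.Dual K A) :
    Module.Dual K A →ₗ[K] (A →ₗ[K] A) :=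
  (((Module.evalEquiv K A).symm.conj).toLinearMap :
      Module.End K (Module.Dual K (Module.Dual K A)) →ₗ[K] Module.End K A) ∘ₗ
    (Module.Dual.transpose :
      (Module.Dual K A →ₗ[K] Module.Dual K A) →ₗ[K]
        (Module.Dual K (Module.Dual K A) →ₗ[K] Module.Dual K (Module.Dual K A))) ∘ₗ
    m

/-- For an operation `m` on `A`, the operator `x ↦ L_m(x)*` on `A*`. -/
noncomputable def LstarA (m : A →ₗ[K] A →ₗ[K] A) :
    A →ₗ[K] (Module.Dual K A →ₗ[K] Module.Dual K A) :=
  Module.Dual.transpose ∘ₗ m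

/-- For an operation `m` on `A`, the operator `x ↦ R_m(x)*` on `A*`. -/
noncomputable def RstarA (m : A →ₗ[K] A →ₗ[K] A) :
    A →ₗ[K] (Module.Dual K A →ₗ[K] Module.Dual K A) :=
  Module.Dual.transpose ∘ₗ m.flip

variable {A}

/-- The product `≻_D` of the double `D = A ⊕ A*`:
`(x+a) ≻_D (y+b) = x ≻ y - (R*_≺,A* + R*_≻,A*)(a) y + L*_≺,A*(b) x
  + a ≻_{A*} b - (R*_≺,A + R*_≻,A)(x) b + L*_≺,A(y) a`. -/
noncomputable def succD (sA pA : A →ₗ[K] A →ₗ[K] A)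
    (sB pB : Module.Dual K A →ₗ[K] Module.Dual K A →ₗ[K] Module.Dual K A) :
    (A × Module.Dual K A) →ₗ[K] (A × Module.Dual K A) →ₗ[K] (A × Module.Dual K A) :=
  ((sA.compl₁₂ (LinearMap.fst K A (Module.Dual K A)) (LinearMap.fst K A (Module.Dual K A))).compr₂
      (LinearMap.inl K A (Module.Dual K A)))
    + (((RstarB A pB + RstarB A sB).compl₁₂ (LinearMap.snd K A (Module.Dual K A))
        (LinearMap.fst K A (Module.Dual K A))).compr₂ (-(LinearMap.inl K A (Module.Dual K A))))
    + (((LstarB A pB).flip.compl₁₂ (LinearMap.fst K A (Module.Dual K A))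
        (LinearMap.snd K A (Module.Dual K A))).compr₂ (LinearMap.inl K A (Module.Dual K A)))
    + ((sB.compl₁₂ (LinearMap.snd K A (Module.Dual K A)) (LinearMap.snd K A (Module.Dual K A))).compr₂
        (LinearMap.inr K A (Module.Dual K A)))
    + (((RstarA A pA + RstarA A sA).compl₁₂ (LinearMap.fst K A (Module.Dual K A))
        (LinearMap.snd K A (Module.Dual K A))).compr₂ (-(LinearMap.inr K A (Module.Dual K A))))
    + (((LstarA A pA).flip.compl₁₂ (LinearMap.snd K A (Module.Dual K A))
        (LinearMap.fst K A (Module.Dual K A))).compr₂ (LinearMap.inr K A (Module.Dual K A)))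

/-- The product `≺_D` of the double `D = A ⊕ A*`:
`(x+a) ≺_D (y+b) = x ≺ y + R*_≻,A*(a) y - (L*_≺,A* + L*_≻,A*)(b) x
  + a ≺_{A*} b + R*_≻,A(x) b - (L*_≺,A + L*_≻,A)(y) a`. -/
noncomputable def precD (sA pA : A →ₗ[K] A →ₗ[K] A)
    (sB pB : Module.Dual K A →ₗ[K] Module.Dual K A →ₗ[K] Module.Dual K A) :
    (A × Module.Dual K A) →ₗ[K] (A × Module.Dual K A) →ₗ[K] (A × Module.Dual K A) :=
  ((pA.compl₁₂ (LinearMap.fst K A (Module.Dual K A)) (LinearMap.fst K A (Module.Dual K A))).compr₂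
      (LinearMap.inl K A (Module.Dual K A)))
    + (((RstarB A sB).compl₁₂ (LinearMap.snd K A (Module.Dual K A))
        (LinearMap.fst K A (Module.Dual K A))).compr₂ (LinearMap.inl K A (Module.Dual K A)))
    + (((LstarB A pB + LstarB A sB).flip.compl₁₂ (LinearMap.fst K A (Module.Dual K A))
        (LinearMap.snd K A (Module.Dual K A))).compr₂ (-(LinearMap.inl K A (Module.Dual K A))))
    + ((pB.compl₁₂ (LinearMap.snd K A (Module.Dual K A)) (LinearMap.snd K A (Module.Dual K A))).compr₂
        (LinearMap.inr K A (Module.Dual K A)))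
    + (((RstarA A sA).compl₁₂ (LinearMap.fst K A (Module.Dual K A))
        (LinearMap.snd K A (Module.Dual K A))).compr₂ (LinearMap.inr K A (Module.Dual K A)))
    + (((LstarA A pA + LstarA A sA).flip.compl₁₂ (LinearMap.snd K A (Module.Dual K A))
        (LinearMap.fst K A (Module.Dual K A))).compr₂ (-(LinearMap.inr K A (Module.Dual K A))))

end Double

variable {A : Type*} [AddCommGroup A] [Module K A]


section AuxPlace
variable {M : Type*} [AddCommGroup M] [Module K M]

lemma place1_tmul (m : M →ₗ[K] M →ₗ[K] M) (x a y b : M) :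
    place1 m ((x ⊗ₜ[K] a) ⊗ₜ[K] (y ⊗ₜ[K] b)) = (m x y) ⊗ₜ[K] (a ⊗ₜ[K] b) := by
  simp [place1, tensorTensorTensorComm_tmul]

lemma place2_tmul (m : M →ₗ[K] M →ₗ[K] M) (x a y b : M) :
    place2 m ((x ⊗ₜ[K] a) ⊗ₜ[K] (y ⊗ₜ[K] b)) = y ⊗ₜ[K] ((m x b) ⊗ₜ[K] a) := by
  simp [place2, tensorTensorTensorComm_tmul, TensorProduct.leftComm_tmul]

lemma place3_tmul (m : M →ₗ[K] M →ₗ[K] M) (x a y b : M) :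
    place3 m ((x ⊗ₜ[K] a) ⊗ₜ[K] (y ⊗ₜ[K] b)) = x ⊗ₜ[K] (y ⊗ₜ[K] (m a b)) := by
  simp [place3, tensorTensorTensorComm_tmul]

lemma sum_sub3 {γ : Type*} (s : Finset γ) (f g : γ → M ⊗[K] (M ⊗[K] M)) :
    (∑ x ∈ s, (f x - g x)) = ∑ x ∈ s, f x - ∑ x ∈ s, g x :=
  Finset.sum_sub_distrib f g

lemma finish3 (a c e d : M ⊗[K] (M ⊗[K] M)) (h1 : a = e) (h2 : c = d) :
    a + (c - e) - d = 0 := by rw [h1, h2]; abel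

lemma tmul_sub' (x : M) (P Q : M ⊗[K] M) :
    x ⊗ₜ[K] (P - Q) = x ⊗ₜ[K] P - x ⊗ₜ[K] Q :=
  TensorProduct.tmul_sub x P Q

end AuxPlace

section AuxProd
variable {A : Type*} [AddCommGroup A] [Module K A] [FiniteDimensional K A]
variable (sA pA : A →ₗ[K] A →ₗ[K] A)
    (sB pB : Module.Dual K A →ₗ[K] Module.Dual K A →ₗ[K] Module.Dual K A)

lemma succD_xx (x y : A) : succD sA pA sB pB (x,0) (y,0) = (sA x y, 0) := by
  simp [succD, LinearMap.compr₂_apply, LinearMap.compl₁₂_apply, Prod.ext_iff]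

lemma precD_xx (x y : A) : precD sA pA sB pB (x,0) (y,0) = (pA x y, 0) := by
  simp [precD, LinearMap.compr₂_apply, LinearMap.compl₁₂_apply, Prod.ext_iff]

lemma succD_xa (x : A) (c : Module.Dual K A) : succD sA pA sB pB (x,0) (0,c) =
    (LstarB A pB c x, -(RstarA A pA x c + RstarA A sA x c)) := by
  simp [succD, LinearMap.compr₂_apply, LinearMap.compl₁₂_apply, Prod.ext_iff]

lemma precD_aa (a c : Module.Dual K A) : precD sA pA sB pB (0,a) (0,c) = (0, pB a c) := by
  simp [precD, LinearMap.compr₂_apply, LinearMap.compl₁₂_apply, Prod.ext_iff]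

lemma LstarB_transpose (c d : Module.Dual K A) :
    Module.Dual.transpose (R := K) (LstarB A pB c) d = pB c d := by
  ext x
  simp [LstarB, Module.Dual.transpose_apply, LinearEquiv.conj_apply,
    Module.apply_evalEquiv_symm_apply]

end AuxProd

section AuxKey
variable {A : Type*} [AddCommGroup A] [Module K A]

lemma key {ι : Type*} [Fintype ι] (b : Module.Basis ι K A) (f : A →ₗ[K] A) :
    ∑ i, f (b i) ⊗ₜ[K] b.coord i
      = ∑ i, b i ⊗ₜ[K] Module.Dual.transpose (R := K) f (b.coord i) := by
  calc ∑ i, f (b i) ⊗ₜ[K] b.coord i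
      = ∑ i, ∑ k, b.coord k (f (b i)) • (b k ⊗ₜ[K] b.coord i) := by
        refine Finset.sum_congr rfl fun i _ => ?_
        conv_lhs => rw [← b.sum_repr (f (b i))]
        rw [sum_tmul]
        exact Finset.sum_congr rfl fun k _ => by rw [smul_tmul', Module.Basis.coord_apply]
    _ = ∑ k, ∑ i, (Module.Dual.transpose (R := K) f (b.coord k)) (b i)
          • (b k ⊗ₜ[K] b.coord i) := by
        rw [Finset.sum_comm]
        exact Finset.sum_congr rfl fun k _ => Finset.sum_congr rfl fun i _ => by
          rw [Module.Dual.transpose_apply]; rfl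
    _ = ∑ k, b k ⊗ₜ[K] Module.Dual.transpose (R := K) f (b.coord k) := by
        refine Finset.sum_congr rfl fun k _ => ?_
        simp_rw [← tmul_smul, ← tmul_sum, Module.Basis.sum_dual_apply_smul_coord]

lemma keyD {ι : Type*} [Fintype ι] (b : Module.Basis ι K A) (f : A →ₗ[K] A) :
    ∑ i, ((f (b i), 0) : A × Module.Dual K A) ⊗ₜ[K] ((0, b.coord i) : A × Module.Dual K A)
      = ∑ i, ((b i, 0) : A × Module.Dual K A) ⊗ₜ[K]
          ((0, Module.Dual.transpose (R := K) f (b.coord i)) : A × Module.Dual K A) := by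
  have h := congrArg (TensorProduct.map (LinearMap.inl K A (Module.Dual K A))
    (LinearMap.inr K A (Module.Dual K A))) (key b f)
  simpa using h

lemma key12 {ι : Type*} [Fintype ι] (b : Module.Basis ι K A) (f : A →ₗ[K] A)
    (w : A × Module.Dual K A) :
    ∑ i, ((f (b i), 0) : A × Module.Dual K A) ⊗ₜ[K]
        (((0, b.coord i) : A × Module.Dual K A) ⊗ₜ[K] w)
      = ∑ i, ((b i, 0) : A × Module.Dual K A) ⊗ₜ[K]
          (((0, Module.Dual.transpose (R := K) f (b.coord i)) : A × Module.Dual K A)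
            ⊗ₜ[K] w) := by
  have h := congrArg (TensorProduct.map (LinearMap.id)
    ((TensorProduct.mk K (A × Module.Dual K A) (A × Module.Dual K A)).flip w)) (keyD b f)
  simpa using h

lemma key23 {ι : Type*} [Fintype ι] (b : Module.Basis ι K A) (f : A →ₗ[K] A)
    (w : A × Module.Dual K A) :
    ∑ i, w ⊗ₜ[K] (((f (b i), 0) : A × Module.Dual K A) ⊗ₜ[K]
        ((0, b.coord i) : A × Module.Dual K A))
      = ∑ i, w ⊗ₜ[K] (((b i, 0) : A × Module.Dual K A) ⊗ₜ[K]
          ((0, Module.Dual.transpose (R := K) f (b.coord i)) : A × Module.Dual K A)) := by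
  have h := congrArg (TensorProduct.mk K (A × Module.Dual K A)
    ((A × Module.Dual K A) ⊗[K] (A × Module.Dual K A)) w) (keyD b f)
  simpa [tmul_sum] using h

end AuxKey

/-- for an anti-dendriform bialgebra (encoded by anti-dendriform
structures on `A` and `A*` such that the double product on `D = A ⊕ A*` is
anti-dendriform), the element `r = Σᵢ eᵢ ⊗ eᵢ*` of `D ⊗ D` solves the AD-YBE in `D`. -/
theorem stmt14 [FiniteDimensional K A]
    (sA pA : A →ₗ[K] A →ₗ[K] A) (hA : IsAntiDend sA pA)
    (sB pB : Module.Dual K A →ₗ[K] Module.Dual K A →ₗ[K] Module.Dual K A)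
    (hB : IsAntiDend sB pB)
    (hD : IsAntiDend (succD sA pA sB pB) (precD sA pA sB pB))
    {ι : Type*} [Fintype ι] (b : Module.Basis ι K A) :
    AYBE (succD sA pA sB pB) (precD sA pA sB pB)
      (∑ i : ι, ((b i, 0) : A × Module.Dual K A) ⊗ₜ[K]
        ((0, b.coord i) : A × Module.Dual K A)) := by
  classical
  unfold AYBE adD
  set r : (A × Module.Dual K A) ⊗[K] (A × Module.Dual K A) := ∑ i : ι, ((b i, 0) : A × Module.Dual K A) ⊗ₜ[K] ((0, b.coord i) : A × Module.Dual K A) with hrdef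
  have hrr : r ⊗ₜ[K] r = ∑ i : ι, ∑ j : ι,
      (((b i, 0) : A × Module.Dual K A) ⊗ₜ[K] ((0, b.coord i) : A × Module.Dual K A)) ⊗ₜ[K]
        (((b j, 0) : A × Module.Dual K A) ⊗ₜ[K] ((0, b.coord j) : A × Module.Dual K A)) := by
    rw [hrdef, sum_tmul]
    exact Finset.sum_congr rfl fun i _ => by rw [tmul_sum]
  rw [hrr]
  simp only [map_sum, place1_tmul, place2_tmul, place3_tmul, LinearMap.add_apply,
    succD_xx, precD_xx, succD_xa, precD_aa, Prod.mk_add_mk, add_zero]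
  have hsplit : ∀ (u : A) (v : Module.Dual K A), ((u, -v) : A × Module.Dual K A) = (u, 0) - (0, v) := by
    intro u v; ext <;> simp
  simp only [hsplit, sub_tmul]
  simp only [tmul_sub']
  simp only [sum_sub3]
  refine finish3 _ _ _ _ ?_ ?_
  · -- h1 : S1 = S2b
    rw [Finset.sum_comm]
    refine Finset.sum_congr rfl fun x _ => ?_
    have h := key12 b (sA.flip (b x) + pA.flip (b x)) ((0, b.coord x) : A × Module.Dual K A)
    simpa [RstarA, LinearMap.add_apply, LinearMap.flip_apply, map_add, add_comm] using h
  · -- h2 : S2a = S3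
    rw [Finset.sum_comm]
    refine Finset.sum_congr rfl fun x _ => ?_
    have h := key23 b (LstarB A pB (b.coord x)) ((b x, 0) : A × Module.Dual K A)
    simpa [LstarB_transpose] using h
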